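/- With the Markov measure ℙⁿ and the uniform counting measure Pⁿ on the sphere S_n of the universal cover of an almost semisimple graph Γ, there exists c > 1 such that for every subset A of the universal cover: c⁻¹·ℙⁿ(A) ≤ Pⁿ(A ∩ LG) ≤ c·ℙⁿ(A), where LG is the set of elements whose vertex has large growth. -/

import Mathlib

open Filter

/-- The number of directed paths of length `n` starting at vertex `v`: `(Mⁿ 𝟙)_v`. -/
def pathCount {V : Type*} [Fintype V] [DecidableEq V]
    (M : Matrix V V ℕ) (v : V) (n : ℕ) : ℕ :=
  (M ^ n).mulVec (fun _ => 1) v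

/-- Almost semisimplicity of an adjacency matrix `M` with initial vertex `v0` and
growth `lam > 1`. -/
structure AlmostSemisimple {V : Type*} [Fintype V] [DecidableEq V]
    (M : Matrix V V ℕ) (v0 : V) (lam : ℝ) : Prop where
  growth_gt_one : 1 < lam
  accessible : ∀ v : V, ∃ n : ℕ, (M ^ n) v0 v ≠ 0
  eigen_le : ∀ μ : ℂ, (Matrix.charpoly (M.map (Nat.cast : ℕ → ℂ))).IsRoot μ →
    ‖μ‖ ≤ lam
  eigen_top : ∃ μ : ℂ, (Matrix.charpoly (M.map (Nat.cast : ℕ → ℂ))).IsRoot μ ∧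
    ‖μ‖ = lam
  semisimple_top : ∀ μ : ℂ, ‖μ‖ = lam →
    ∀ x : V → ℂ,
      (M.map (Nat.cast : ℕ → ℂ) - μ • 1).mulVec
          ((M.map (Nat.cast : ℕ → ℂ) - μ • 1).mulVec x) = 0 →
      (M.map (Nat.cast : ℕ → ℂ) - μ • 1).mulVec x = 0

/-- `ρ1 v` is the Cesàro limit `ρ(𝟙)_v = lim_N (1/N) Σ_{n<N} (Mⁿ𝟙)_v / lamⁿ`. -/
def IsRho1 {V : Type*} [Fintype V] [DecidableEq V]
    (M : Matrix V V ℕ) (lam : ℝ) (ρ1 : V → ℝ) : Prop :=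
  ∀ v : V, Tendsto
    (fun N : ℕ => (N : ℝ)⁻¹ * ∑ n ∈ Finset.range N, (pathCount M v n : ℝ) / lam ^ n)
    atTop (nhds (ρ1 v))

/-- The adjacency matrix (with multiplicities) of the directed graph with edge set `E`
and endpoint maps `src`, `tgt`. -/
def adjM {V E : Type*} [Fintype E] [DecidableEq V] (src tgt : E → V) :
    Matrix V V ℕ := fun i j => (Finset.univ.filter fun e => src e = i ∧ tgt e = j).card

/-- A directed edge path starting at `v0`, encoded as a list of edges. -/
def IsPath {V E : Type*} (src tgt : E → V) (v0 : V) (l : List E) : Prop :=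
  l.Chain' (fun e f => tgt e = src f) ∧ ∀ e ∈ l.head?, src e = v0

/-- The terminal vertex of an edge path (the basepoint `v0` for the empty path). -/
def endV {V E : Type*} (tgt : E → V) (v0 : V) (l : List E) : V :=
  (l.getLast?).elim v0 tgt

set_option maxHeartbeats 1000000
set_option linter.unusedSectionVars false

section PARTE

variable {V : Type*} [Fintype V] [DecidableEq V]

section aux
lemma isRoot_charpoly_iff {K : Type*} [Field K] (A : Matrix V V K) (μ : K) :
    (Matrix.charpoly A).IsRoot μ ↔ (μ • (1 : Matrix V V K) - A).det = 0 := by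
  have h : Polynomial.eval μ (Matrix.charpoly A) = (μ • (1 : Matrix V V K) - A).det := by
    rw [Matrix.charpoly]
    rw [show Polynomial.eval μ (A.charmatrix.det)
        = (Polynomial.evalRingHom μ) (A.charmatrix.det) from rfl, RingHom.map_det]
    congr 1
    ext i j
    simp only [RingHom.mapMatrix_apply, Matrix.map_apply, Matrix.charmatrix_apply,
      Matrix.sub_apply, Matrix.smul_apply, Matrix.one_apply, Matrix.diagonal_apply,
      Polynomial.coe_evalRingHom, Polynomial.eval_sub, Polynomial.eval_C, smul_eq_mul]
    by_cases hij : i = j <;> simp [hij]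
  rw [Polynomial.IsRoot, h]

lemma mulVecLin_pow_apply (Mc : Matrix V V ℂ) (n : ℕ) (x : V → ℂ) :
    (Mc.mulVecLin ^ n) x = (Mc ^ n).mulVec x := by
  induction n with
  | zero => simp
  | succ n ih =>
      rw [pow_succ', pow_succ']
      have : (Mc.mulVecLin * Mc.mulVecLin ^ n) x = Mc.mulVecLin ((Mc.mulVecLin ^ n) x) := rfl
      rw [this, ih, Matrix.mulVecLin_apply, Matrix.mulVec_mulVec]

lemma mulVecLin_sub_smul_one (Mc : Matrix V V ℂ) (μ : ℂ) (x : V → ℂ) :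
    (Mc - μ • 1).mulVec x = (Mc.mulVecLin - μ • 1) x := by
  rw [Matrix.sub_mulVec]
  simp [Matrix.smul_mulVec, Matrix.one_mulVec]

lemma exists_eigenvector_of_gen {R M : Type*} [Field R] [AddCommGroup M] [Module R M]
    (g : Module.End R M) (x : M) (hx : x ≠ 0) (k : ℕ) (hk : (g ^ k) x = 0) :
    ∃ y : M, y ≠ 0 ∧ g y = 0 := by
  induction k generalizing x with
  | zero => simp at hk; exact absurd hk hx
  | succ k ih =>
      by_cases h : (g ^ k) x = 0
      · exact ih x hx h
      · refine ⟨(g ^ k) x, h, ?_⟩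
        have : g ((g ^ k) x) = (g ^ (k + 1)) x := by
          rw [pow_succ']; rfl
        rw [this, hk]

lemma pow_apply_eq_zero_of_sq {R M : Type*} [Field R] [AddCommGroup M] [Module R M]
    (g : Module.End R M) (hss : ∀ z, g (g z) = 0 → g z = 0)
    (k : ℕ) (x : M) (hk : (g ^ (k + 1)) x = 0) : g x = 0 := by
  induction k generalizing x with
  | zero => simpa using hk
  | succ k ih =>
      apply ih
      have h2 : g (g ((g ^ k) x)) = 0 := by
        have : (g ^ (k + 2)) x = g (g ((g ^ k) x)) := by
          rw [show k + 2 = 2 + k from by ring, pow_add]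
          rfl
        rw [← this, hk]
      have := hss ((g ^ k) x) h2
      rw [show (g ^ (k+1)) x = g ((g ^ k) x) from by rw [pow_succ']; rfl, this]

lemma choose_mul_pow_le_bound {r lam : ℝ} (hr0 : 0 ≤ r) (hrl : r < lam) (hlam : 0 < lam) (j : ℕ) :
    ∃ C : ℝ, 0 ≤ C ∧ ∀ n : ℕ, (n.choose j : ℝ) * r ^ (n - j) ≤ C * lam ^ n := by
  set q : ℕ → ℝ := fun n => (n.choose j : ℝ) * r ^ (n - j) * (lam⁻¹) ^ n with hq
  have hq0 : ∀ n, 0 ≤ q n := fun n => by positivity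
  have htend : Tendsto q atTop (nhds 0) := by
    rcases eq_or_lt_of_le hr0 with h0 | hrpos
    · apply Tendsto.congr' _ tendsto_const_nhds
      filter_upwards [eventually_ge_atTop (j + 1)] with n hn
      have : r ^ (n - j) = 0 := by
        rw [← h0]; exact zero_pow (by omega)
      simp [hq, this]
    · have hupper : ∀ᶠ n : ℕ in atTop, q n ≤ r⁻¹ ^ j * ((n : ℝ) ^ j * (r / lam) ^ n) := by
        filter_upwards [eventually_ge_atTop j] with n hn
        have h1 : (n.choose j : ℝ) ≤ (n : ℝ) ^ j := by
          calc (n.choose j : ℝ) ≤ (n : ℝ) ^ j / (j.factorial : ℝ) := Nat.choose_le_pow_div j n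
          _ ≤ (n : ℝ) ^ j := by
            apply div_le_self (by positivity)
            exact_mod_cast Nat.one_le_iff_ne_zero.2 (Nat.factorial_ne_zero j)
        have h2 : r ^ (n - j) = r ^ n * r⁻¹ ^ j := by
          rw [pow_sub₀ r (ne_of_gt hrpos) hn, inv_pow]
        have heq : q n = (n.choose j : ℝ) * (r ^ n * r⁻¹ ^ j) * lam⁻¹ ^ n := by
          simp only [hq]; rw [h2]
        rw [heq]
        have h3 : (r / lam) ^ n = r ^ n * lam⁻¹ ^ n := by rw [div_eq_mul_inv, mul_pow]
        rw [h3]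
        have hb : 0 ≤ r ^ n * lam⁻¹ ^ n := by positivity
        calc (n.choose j : ℝ) * (r ^ n * r⁻¹ ^ j) * lam⁻¹ ^ n
            = (n.choose j : ℝ) * (r ^ n * lam⁻¹ ^ n) * r⁻¹ ^ j := by ring
          _ ≤ (n : ℝ) ^ j * (r ^ n * lam⁻¹ ^ n) * r⁻¹ ^ j := by
              apply mul_le_mul_of_nonneg_right (mul_le_mul_of_nonneg_right h1 hb) (by positivity)
          _ = r⁻¹ ^ j * ((n : ℝ) ^ j * (r ^ n * lam⁻¹ ^ n)) := by ring
      have hgeom : Tendsto (fun n : ℕ => r⁻¹ ^ j * ((n : ℝ) ^ j * (r / lam) ^ n)) atTop (nhds 0) := by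
        have hnorm : ‖r / lam‖ < 1 := by
          rw [Real.norm_eq_abs, abs_of_nonneg (by positivity)]
          rw [div_lt_one hlam]; exact hrl
        have := (summable_pow_mul_geometric_of_norm_lt_one j hnorm).tendsto_atTop_zero
        simpa using this.const_mul (r⁻¹ ^ j)
      exact squeeze_zero' (Eventually.of_forall hq0) hupper hgeom
  obtain ⟨C, hC⟩ := htend.bddAbove_range
  refine ⟨max C 0, le_max_right _ _, fun n => ?_⟩
  have hqn : q n ≤ max C 0 :=
    le_trans (hC (Set.mem_range_self n)) (le_max_left _ _)
  have := mul_le_mul_of_nonneg_right hqn (le_of_lt (pow_pos hlam n))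
  rw [hq] at this
  simp only at this
  rw [mul_assoc, ← mul_pow, inv_mul_cancel₀ (ne_of_gt hlam), one_pow, mul_one] at this
  exact this
end aux

/-- Main spectral bound : `pathCount M v n ≤ B * lam ^ n` uniformly. -/
lemma exists_pathCount_le {M : Matrix V V ℕ} {lam : ℝ}
    (hlam : 0 < lam)
    (heig : ∀ μ : ℂ, (Matrix.charpoly (M.map (Nat.cast : ℕ → ℂ))).IsRoot μ →
      ‖μ‖ ≤ lam)
    (hss : ∀ μ : ℂ, ‖μ‖ = lam → ∀ x : V → ℂ,
      (M.map (Nat.cast : ℕ → ℂ) - μ • 1).mulVec ((M.map (Nat.cast : ℕ → ℂ) - μ • 1).mulVec x) = 0 →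
      (M.map (Nat.cast : ℕ → ℂ) - μ • 1).mulVec x = 0) :
    ∃ B : ℝ, 0 < B ∧ ∀ (v : V) (n : ℕ), (pathCount M v n : ℝ) ≤ B * lam ^ n := by
  classical
  set Mc : Matrix V V ℂ := M.map (Nat.cast : ℕ → ℂ) with hMc
  set f : Module.End ℂ (V → ℂ) := Mc.mulVecLin with hf
  -- the submodule of vectors with controlled growth
  set S : Submodule ℂ (V → ℂ) :=
    { carrier := {x | ∃ C : ℝ, ∀ n : ℕ, ‖(f ^ n) x‖ ≤ C * lam ^ n}
      add_mem' := by
        rintro a b ⟨Ca, hCa⟩ ⟨Cb, hCb⟩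
        exact ⟨Ca + Cb, fun n => by
          calc ‖(f ^ n) (a + b)‖ = ‖(f ^ n) a + (f ^ n) b‖ := by rw [map_add]
          _ ≤ ‖(f ^ n) a‖ + ‖(f ^ n) b‖ := norm_add_le _ _
          _ ≤ Ca * lam ^ n + Cb * lam ^ n := add_le_add (hCa n) (hCb n)
          _ = (Ca + Cb) * lam ^ n := by ring⟩
      zero_mem' := ⟨0, fun n => by simp⟩
      smul_mem' := by
        rintro c a ⟨Ca, hCa⟩
        refine ⟨‖c‖ * Ca, fun n => ?_⟩
        rw [map_smul, norm_smul, mul_assoc]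
        exact mul_le_mul_of_nonneg_left (hCa n) (norm_nonneg c) } with hS
  -- every generalized eigenspace is contained in S
  have hgen : ∀ μ : ℂ, f.maxGenEigenspace μ ≤ S := by
    intro μ x hx
    rcases eq_or_ne x 0 with rfl | hx0
    · exact Submodule.zero_mem S
    obtain ⟨k, hk⟩ := (Module.End.mem_maxGenEigenspace f μ x).1 hx
    -- μ is a root of the charpoly
    have habs : ‖μ‖ ≤ lam := by
      obtain ⟨y, hy0, hy⟩ := exists_eigenvector_of_gen (f - μ • 1) x hx0 k hk
      apply heig
      rw [isRoot_charpoly_iff]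
      rw [← Matrix.exists_mulVec_eq_zero_iff]
      refine ⟨y, hy0, ?_⟩
      have h0 : (μ • 1 - Mc) = -(Mc - μ • 1) := (neg_sub _ _).symm
      rw [h0, Matrix.neg_mulVec, mulVecLin_sub_smul_one, hy, neg_zero]
    rcases eq_or_lt_of_le habs with heq | hlt
    · -- top eigenvalue: x is an honest eigenvector
      have hgx : (f - μ • 1) x = 0 := by
        rcases k with _ | k
        · simp at hk; exact absurd hk hx0
        · apply pow_apply_eq_zero_of_sq (f - μ • 1) _ k x hk
          intro z hz
          have h1 : ∀ w : V → ℂ, (f - μ • 1) w = (Mc - μ • 1).mulVec w := fun w =>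
            (mulVecLin_sub_smul_one Mc μ w).symm
          rw [h1, h1] at hz
          rw [h1]
          exact hss μ heq z hz
      have hfx : f x = μ • x := by
        have h := hgx
        rw [LinearMap.sub_apply, LinearMap.smul_apply, Module.End.one_apply] at h
        exact sub_eq_zero.1 h
      have hfn : ∀ n : ℕ, (f ^ n) x = μ ^ n • x := by
        intro n
        induction n with
        | zero => simp
        | succ n ih =>
            rw [pow_succ', show ((f * f ^ n) x) = f ((f ^ n) x) from rfl, ih, map_smul, hfx,
              smul_smul, ← pow_succ]
      refine ⟨‖x‖, fun n => ?_⟩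
      rw [hfn n, norm_smul, norm_pow, heq, mul_comm]
    · -- |μ| < lam
      set g : Module.End ℂ (V → ℂ) := f - μ • 1 with hg
      have hcomm : Commute g (μ • (1 : Module.End ℂ (V → ℂ))) :=
        ((Commute.one_right g).smul_right μ)
      have hfg : f = g + μ • 1 := by rw [hg, sub_add_cancel]
      have hgj : ∀ j : ℕ, k ≤ j → (g ^ j) x = 0 := by
        intro j hj
        have : g ^ j = g ^ (j - k) * g ^ k := by rw [← pow_add]; congr 1; omega
        rw [this, show ((g ^ (j - k) * g ^ k) x) = (g ^ (j - k)) ((g ^ k) x) from rfl, hk,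
          map_zero]
      -- the expansion of f ^ n
      have hexp : ∀ n : ℕ, (f ^ n) x
          = ∑ j ∈ Finset.range (n + 1), ((n.choose j : ℂ) * μ ^ (n - j)) • ((g ^ j) x) := by
        intro n
        rw [hfg, hcomm.add_pow]
        rw [show ((∑ j ∈ Finset.range (n + 1),
            g ^ j * (μ • (1 : Module.End ℂ (V → ℂ))) ^ (n - j) * (n.choose j : Module.End ℂ (V → ℂ))) x)
          = ∑ j ∈ Finset.range (n + 1),
            (g ^ j * (μ • (1 : Module.End ℂ (V → ℂ))) ^ (n - j) * (n.choose j : Module.End ℂ (V → ℂ))) x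
          from by rw [LinearMap.sum_apply]]
        refine Finset.sum_congr rfl fun j _ => ?_
        have e2 : ((n.choose j : ℕ) : Module.End ℂ (V → ℂ))
            = ((n.choose j : ℂ)) • (1 : Module.End ℂ (V → ℂ)) := by
          rw [Nat.cast_smul_eq_nsmul]
          simp
        have e3 : g ^ j * (μ • (1 : Module.End ℂ (V → ℂ))) ^ (n - j)
              * ((n.choose j : ℕ) : Module.End ℂ (V → ℂ))
            = ((n.choose j : ℂ) * μ ^ (n - j)) • g ^ j := by
          rw [e2, smul_pow, one_pow, mul_smul_comm, mul_one, mul_smul_comm, mul_one, smul_smul]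
        rw [e3, LinearMap.smul_apply]
      -- now bound the norms
      set r := ‖μ‖ with hr
      have hCs : ∀ j : ℕ, ∃ C : ℝ, 0 ≤ C ∧ ∀ n : ℕ,
          (n.choose j : ℝ) * r ^ (n - j) ≤ C * lam ^ n :=
        fun j => choose_mul_pow_le_bound (norm_nonneg μ) hlt hlam j
      choose Cs hCs0 hCsb using hCs
      refine ⟨∑ j ∈ Finset.range k, Cs j * ‖(g ^ j) x‖, fun n => ?_⟩
      have step1 : ‖(f ^ n) x‖ ≤ ∑ j ∈ Finset.range (n + 1),
          (n.choose j : ℝ) * r ^ (n - j) * ‖(g ^ j) x‖ := by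
        rw [hexp n]
        refine le_trans (norm_sum_le _ _) (Finset.sum_le_sum fun j _ => ?_)
        rw [norm_smul]
        apply mul_le_mul_of_nonneg_right _ (norm_nonneg _)
        rw [norm_mul, norm_pow]
        simp [hr, Complex.norm_natCast]
      set t : ℕ → ℝ := fun j => (n.choose j : ℝ) * r ^ (n - j) * ‖(g ^ j) x‖ with ht
      have ht0 : ∀ j, k ≤ j → t j = 0 := by
        intro j hj
        simp only [ht]
        rw [hgj j hj, norm_zero, mul_zero]
      have step2 : ∑ j ∈ Finset.range (n + 1), t j ≤ ∑ j ∈ Finset.range k, t j := by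
        have hsub : ∑ j ∈ Finset.range (n + 1) ∩ Finset.range k, t j
            = ∑ j ∈ Finset.range (n + 1), t j := by
          apply Finset.sum_subset Finset.inter_subset_left
          intro j hj hj'
          apply ht0
          by_contra hc
          push_neg at hc
          exact hj' (Finset.mem_inter.2 ⟨hj, Finset.mem_range.2 hc⟩)
        rw [← hsub]
        apply Finset.sum_le_sum_of_subset_of_nonneg Finset.inter_subset_right
        intro j _ _
        simp only [ht]
        positivity
      have step3 : ∑ j ∈ Finset.range k, t j
          ≤ (∑ j ∈ Finset.range k, Cs j * ‖(g ^ j) x‖) * lam ^ n := by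
        rw [Finset.sum_mul]
        refine Finset.sum_le_sum fun j _ => ?_
        simp only [ht]
        have := mul_le_mul_of_nonneg_right (hCsb j n) (norm_nonneg ((g ^ j) x))
        calc (n.choose j : ℝ) * r ^ (n - j) * ‖(g ^ j) x‖
            ≤ Cs j * lam ^ n * ‖(g ^ j) x‖ := this
          _ = Cs j * ‖(g ^ j) x‖ * lam ^ n := by ring
      exact le_trans step1 (le_trans step2 step3)
  -- conclude : S = ⊤
  have htop : ∀ x : V → ℂ, x ∈ S := by
    intro x
    have h1 : (⊤ : Submodule ℂ (V → ℂ)) ≤ S := by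
      rw [← Module.End.iSup_maxGenEigenspace_eq_top f]
      exact iSup_le hgen
    exact h1 trivial
  obtain ⟨C, hC⟩ := htop (fun _ => (1 : ℂ))
  refine ⟨max C 1, lt_of_lt_of_le zero_lt_one (le_max_right _ _), fun v n => ?_⟩
  have hpow : Mc ^ n = (M ^ n).map (Nat.cast : ℕ → ℂ) := by
    have : Mc = (Nat.castRingHom ℂ).mapMatrix M := rfl
    rw [this, ← map_pow]
    rfl
  have hval : (f ^ n) (fun _ => (1 : ℂ)) v = ((pathCount M v n : ℕ) : ℂ) := by
    rw [mulVecLin_pow_apply, hpow]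
    simp only [pathCount, Matrix.mulVec, dotProduct, Matrix.map_apply]
    push_cast
    rfl
  have h2 : (pathCount M v n : ℝ) = ‖(f ^ n) (fun _ => (1 : ℂ)) v‖ := by
    rw [hval, Complex.norm_natCast]
  rw [h2]
  calc ‖(f ^ n) (fun _ => (1 : ℂ)) v‖
      ≤ ‖(f ^ n) (fun _ => (1 : ℂ))‖ := by
        exact norm_le_pi_norm _ v
    _ ≤ C * lam ^ n := hC n
    _ ≤ max C 1 * lam ^ n :=
        mul_le_mul_of_nonneg_right (le_max_left _ _) (le_of_lt (pow_pos hlam n))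

end PARTE
section PARTF

variable {V : Type*} [Fintype V] [DecidableEq V]

section rho
variable {M : Matrix V V ℕ} {lam : ℝ} {ρ1 : V → ℝ}

lemma pathCount_zero (v : V) : pathCount M v 0 = 1 := by
  simp [pathCount, Matrix.one_mulVec]

lemma pathCount_succ (v : V) (n : ℕ) :
    pathCount M v (n + 1) = ∑ w, M v w * pathCount M w n := by
  simp only [pathCount, pow_succ']
  rw [← Matrix.mulVec_mulVec]
  rfl

lemma pathCount_add (v : V) (n m : ℕ) :
    pathCount M v (n + m) = ∑ w, (M ^ n) v w * pathCount M w m := by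
  simp only [pathCount, pow_add]
  rw [← Matrix.mulVec_mulVec]
  rfl

lemma pathCount_eq_sum (v : V) (n : ℕ) : pathCount M v n = ∑ w, (M ^ n) v w := by
  simp [pathCount, Matrix.mulVec, dotProduct]

lemma pathCount_le_succ_of_edge {v w : V} (h : M v w ≠ 0) (n : ℕ) :
    pathCount M w n ≤ pathCount M v (n + 1) := by
  rw [pathCount_succ]
  calc pathCount M w n ≤ M v w * pathCount M w n :=
        Nat.le_mul_of_pos_left _ (Nat.pos_of_ne_zero h)
    _ ≤ ∑ u, M v u * pathCount M u n :=
        Finset.single_le_sum (f := fun u => M v u * pathCount M u n)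
          (fun u _ => Nat.zero_le _) (Finset.mem_univ w)

lemma rho1_nonneg (hρ : IsRho1 M lam ρ1) (hlam : 0 < lam) (v : V) : 0 ≤ ρ1 v := by
  refine ge_of_tendsto' (hρ v) fun N => ?_
  positivity

/-- `ρ1 w ≤ lam * ρ1 v` along an edge. -/
lemma rho1_le_of_edge (hρ : IsRho1 M lam ρ1) (hlam : 0 < lam) {v w : V} (h : M v w ≠ 0) :
    ρ1 w ≤ lam * ρ1 v := by
  set a : ℕ → ℝ := fun k => (pathCount M v k : ℝ) / lam ^ k with ha
  set b : ℕ → ℝ := fun k => (pathCount M w k : ℝ) / lam ^ k with hb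
  have hab : ∀ k, b k ≤ lam * a (k + 1) := by
    intro k
    have h1 : (pathCount M w k : ℝ) ≤ (pathCount M v (k + 1) : ℝ) := by
      exact_mod_cast pathCount_le_succ_of_edge h k
    simp only [ha, hb]
    rw [div_le_iff₀ (by positivity)]
    have : lam * ((pathCount M v (k+1) : ℝ) / lam ^ (k+1)) * lam ^ k
        = (pathCount M v (k+1) : ℝ) := by
      field_simp [pow_succ]
      ring
    rw [this]
    exact h1
  -- Cesàro averages
  have htb : Tendsto (fun N : ℕ => (N : ℝ)⁻¹ * ∑ k ∈ Finset.range N, b k) atTop (nhds (ρ1 w)) :=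
    hρ w
  have hta' : Tendsto (fun N : ℕ => (N : ℝ)⁻¹ * ∑ k ∈ Finset.range N, a (k + 1)) atTop
      (nhds (ρ1 v)) := by
    have hA : Tendsto (fun N : ℕ => ((N : ℝ) + 1)⁻¹ * ∑ k ∈ Finset.range (N + 1), a k) atTop
        (nhds (ρ1 v)) := by
      have h := (hρ v).comp (tendsto_add_atTop_nat 1)
      apply h.congr
      intro N
      simp only [Function.comp]
      push_cast
      rfl
    have hgoal : Tendsto (fun N : ℕ =>
          (1 + (N : ℝ)⁻¹) * (((N : ℝ) + 1)⁻¹ * ∑ k ∈ Finset.range (N + 1), a k)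
            - (N : ℝ)⁻¹ * a 0) atTop (nhds (ρ1 v)) := by
      have h1 : Tendsto (fun N : ℕ => 1 + (N : ℝ)⁻¹) atTop (nhds 1) := by
        simpa using tendsto_const_nhds.add (tendsto_inv_atTop_nhds_zero_nat (𝕜 := ℝ))
      have h2 : Tendsto (fun N : ℕ => (N : ℝ)⁻¹ * a 0) atTop (nhds 0) := by
        simpa using (tendsto_inv_atTop_nhds_zero_nat (𝕜 := ℝ)).mul_const (a 0)
      have := (h1.mul hA).sub h2
      simpa using this
    apply hgoal.congr'
    filter_upwards [eventually_ge_atTop 1] with N hN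
    have hN0 : (N : ℝ) ≠ 0 := by
      have : (1 : ℝ) ≤ (N : ℝ) := by exact_mod_cast hN
      linarith
    have hsum : ∑ k ∈ Finset.range (N + 1), a k = (∑ k ∈ Finset.range N, a (k + 1)) + a 0 :=
      Finset.sum_range_succ' a N
    rw [hsum]
    have hN1 : ((N : ℝ) + 1) ≠ 0 := by positivity
    field_simp
    ring
  have hle : ∀ N : ℕ, (N : ℝ)⁻¹ * ∑ k ∈ Finset.range N, b k
      ≤ lam * ((N : ℝ)⁻¹ * ∑ k ∈ Finset.range N, a (k + 1)) := by
    intro N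
    have hsum : ∑ k ∈ Finset.range N, b k ≤ ∑ k ∈ Finset.range N, lam * a (k + 1) :=
      Finset.sum_le_sum fun k _ => hab k
    have hm : (0 : ℝ) ≤ (N : ℝ)⁻¹ := by positivity
    calc (N : ℝ)⁻¹ * ∑ k ∈ Finset.range N, b k
        ≤ (N : ℝ)⁻¹ * ∑ k ∈ Finset.range N, lam * a (k + 1) :=
          mul_le_mul_of_nonneg_left hsum hm
      _ = lam * ((N : ℝ)⁻¹ * ∑ k ∈ Finset.range N, a (k + 1)) := by
          rw [← Finset.mul_sum]; ring
  exact le_of_tendsto_of_tendsto' htb (hta'.const_mul lam) hle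
end rho

end PARTF
section PARTG

variable {V : Type*} [Fintype V] [DecidableEq V]

lemma pathCount_add' {M : Matrix V V ℕ} (v : V) (n m : ℕ) :
    pathCount M v (n + m) = ∑ w, (M ^ n) v w * pathCount M w m := by
  simp only [pathCount, pow_add]
  rw [← Matrix.mulVec_mulVec]
  rfl

lemma pathCount_eq_sum' {M : Matrix V V ℕ} (v : V) (n : ℕ) :
    pathCount M v n = ∑ w, (M ^ n) v w := by
  simp [pathCount, Matrix.mulVec, dotProduct]

/-- Lower bound `ρ1 v0 * lam ^ n ≤ B * pathCount M v0 n` from the uniform upper bound. -/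
lemma rho1_le_pathCount {M : Matrix V V ℕ} {lam : ℝ} {ρ1 : V → ℝ}
    (hρ : IsRho1 M lam ρ1) (hlam : 0 < lam) {B : ℝ} (hB0 : 0 < B)
    (hB : ∀ (w : V) (m : ℕ), (pathCount M w m : ℝ) ≤ B * lam ^ m) (v0 : V) (n : ℕ) :
    ρ1 v0 * lam ^ n ≤ B * (pathCount M v0 n : ℝ) := by
  set u : ℕ → ℝ := fun k => (pathCount M v0 k : ℝ) / lam ^ k with hu
  have hu0 : ∀ k, 0 ≤ u k := fun k => by positivity
  -- key : u k ≤ B * u n for k ≥ n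
  have hkey : ∀ k, n ≤ k → u k ≤ B * u n := by
    intro k hk
    have hsplit : (pathCount M v0 k : ℝ) ≤ (pathCount M v0 n : ℝ) * (B * lam ^ (k - n)) := by
      have h1 : pathCount M v0 k = ∑ w, (M ^ n) v0 w * pathCount M w (k - n) := by
        rw [← pathCount_add']
        congr 1
        omega
      rw [h1]
      push_cast
      calc ∑ w, ((M ^ n) v0 w : ℝ) * (pathCount M w (k - n) : ℝ)
          ≤ ∑ w, ((M ^ n) v0 w : ℝ) * (B * lam ^ (k - n)) :=
            Finset.sum_le_sum fun w _ =>
              mul_le_mul_of_nonneg_left (hB w (k - n)) (by positivity)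
        _ = (∑ w, ((M ^ n) v0 w : ℝ)) * (B * lam ^ (k - n)) := by rw [← Finset.sum_mul]
        _ = (pathCount M v0 n : ℝ) * (B * lam ^ (k - n)) := by
            congr 1
            rw [pathCount_eq_sum']
            push_cast
            rfl
    have hlk : lam ^ k = lam ^ n * lam ^ (k - n) := by
      rw [← pow_add]
      congr 1
      omega
    simp only [hu]
    rw [div_le_iff₀ (by positivity), hlk]
    calc (pathCount M v0 k : ℝ) ≤ (pathCount M v0 n : ℝ) * (B * lam ^ (k - n)) := hsplit
      _ = B * ((pathCount M v0 n : ℝ) / lam ^ n) * (lam ^ n * lam ^ (k - n)) := by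
          field_simp
  -- Cesàro average bounded by B * u n + D / N
  set D : ℝ := ∑ k ∈ Finset.range n, u k with hD
  have havg : ∀ N : ℕ, n ≤ N → (N : ℝ)⁻¹ * ∑ k ∈ Finset.range N, u k
      ≤ (N : ℝ)⁻¹ * D + B * u n := by
    intro N hN
    have hsplit : ∑ k ∈ Finset.range N, u k
        = D + ∑ k ∈ Finset.Ico n N, u k := by
      rw [hD, ← Finset.sum_range_add_sum_Ico u hN]
    have h2 : ∑ k ∈ Finset.Ico n N, u k ≤ (N : ℝ) * (B * u n) := by
      calc ∑ k ∈ Finset.Ico n N, u k ≤ ∑ _k ∈ Finset.Ico n N, B * u n :=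
            Finset.sum_le_sum fun k hk => hkey k (Finset.mem_Ico.1 hk).1
        _ = (N - n : ℕ) * (B * u n) := by rw [Finset.sum_const, Nat.card_Ico]; simp
        _ ≤ (N : ℝ) * (B * u n) := by
            apply mul_le_mul_of_nonneg_right _ (mul_nonneg (le_of_lt hB0) (hu0 n))
            exact_mod_cast Nat.sub_le N n
    rcases Nat.eq_zero_or_pos N with rfl | hNpos
    · simp only [Nat.cast_zero, inv_zero, zero_mul, zero_add]
      positivity
    have hNr : (0 : ℝ) < (N : ℝ) := by exact_mod_cast hNpos
    rw [hsplit, mul_add]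
    have : (N : ℝ)⁻¹ * ∑ k ∈ Finset.Ico n N, u k ≤ B * u n := by
      rw [inv_mul_le_iff₀ hNr]
      linarith [h2]
    linarith
  -- take the limit
  have hρn : ρ1 v0 ≤ B * u n := by
    have htend : Tendsto (fun N : ℕ => (N : ℝ)⁻¹ * D + B * u n) atTop (nhds (B * u n)) := by
      have := (tendsto_inv_atTop_nhds_zero_nat (𝕜 := ℝ)).mul_const D
      simpa using this.add (tendsto_const_nhds (x := B * u n))
    refine le_of_tendsto_of_tendsto (hρ v0) htend ?_
    filter_upwards [eventually_ge_atTop n] with N hN using havg N hN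
  have := mul_le_mul_of_nonneg_right hρn (le_of_lt (pow_pos hlam n))
  calc ρ1 v0 * lam ^ n ≤ B * u n * lam ^ n := this
    _ = B * (pathCount M v0 n : ℝ) := by
        simp only [hu]
        field_simp

end PARTG
section PARTH

section paths
variable {V E : Type*} [Fintype V] [DecidableEq V] [Fintype E] [DecidableEq E]
variable (src tgt : E → V)

lemma isPath_nil (v : V) : IsPath src tgt v [] := by
  constructor
  · exact List.isChain_nil
  · intro e he
    simp at he

lemma isPath_cons {v : V} {e : E} {l : List E} :
    IsPath src tgt v (e :: l) ↔ src e = v ∧ IsPath src tgt (tgt e) l := by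
  constructor
  · rintro ⟨hc, hh⟩
    simp only [List.Chain', List.isChain_cons] at hc
    refine ⟨hh e rfl, hc.2, fun f hf => (hc.1 f hf).symm⟩
  · rintro ⟨hsrc, hc, hh⟩
    refine ⟨List.isChain_cons.2 ⟨fun f hf => (hh f hf).symm, hc⟩, fun f hf => ?_⟩
    simp only [List.head?_cons, Option.mem_def, Option.some.injEq] at hf
    rw [← hf]
    exact hsrc

lemma endV_cons (v : V) (e : E) (l : List E) :
    endV tgt v (e :: l) = endV tgt (tgt e) l := by
  cases l with
  | nil => simp [endV]
  | cons f l' =>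
      obtain ⟨a, ha⟩ := Option.isSome_iff_exists.1 (List.getLast?_isSome.2 (List.cons_ne_nil f l'))
      simp [endV, ha]

/-- The finset of length-`n` paths from `v`. -/
def pathFinset : ℕ → V → Finset (List E)
  | 0, _ => {[]}
  | (n + 1), v => (Finset.univ.filter fun e => src e = v).biUnion
      fun e => (pathFinset n (tgt e)).image (e :: ·)

lemma mem_pathFinset (n : ℕ) (v : V) (l : List E) :
    l ∈ pathFinset src tgt n v ↔ IsPath src tgt v l ∧ l.length = n := by
  induction n generalizing v l with
  | zero =>
      simp only [pathFinset, Finset.mem_singleton, List.length_eq_zero_iff]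
      constructor
      · rintro rfl; exact ⟨isPath_nil src tgt v, rfl⟩
      · rintro ⟨_, rfl⟩; rfl
  | succ n ih =>
      simp only [pathFinset, Finset.mem_biUnion, Finset.mem_filter, Finset.mem_univ, true_and,
        Finset.mem_image]
      constructor
      · rintro ⟨e, hsrc, l', hl', rfl⟩
        obtain ⟨hp, hlen⟩ := (ih (tgt e) l').1 hl'
        exact ⟨(isPath_cons src tgt).2 ⟨hsrc, hp⟩, by simp [hlen]⟩
      · rintro ⟨hp, hlen⟩
        cases l with
        | nil => simp at hlen
        | cons e l' =>
            obtain ⟨hsrc, hp'⟩ := (isPath_cons src tgt).1 hp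
            exact ⟨e, hsrc, l', (ih (tgt e) l').2 ⟨hp', by simpa using hlen⟩, rfl⟩

lemma card_pathFinset (n : ℕ) (v : V) :
    (pathFinset src tgt n v).card = pathCount (adjM src tgt) v n := by
  induction n generalizing v with
  | zero => simp [pathFinset, pathCount, Matrix.one_mulVec]
  | succ n ih =>
      have hsucc : pathCount (adjM src tgt) v (n + 1)
          = ∑ w, adjM src tgt v w * pathCount (adjM src tgt) w n := by
        simp only [pathCount, pow_succ']
        rw [← Matrix.mulVec_mulVec]
        rfl
      rw [hsucc]
      rw [pathFinset, Finset.card_biUnion]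
      · have h1 : ∀ e ∈ Finset.univ.filter fun e => src e = v,
            ((pathFinset src tgt n (tgt e)).image (e :: ·)).card
              = pathCount (adjM src tgt) (tgt e) n := by
          intro e _
          rw [Finset.card_image_of_injective _ (fun a b h => by injection h), ih]
        rw [Finset.sum_congr rfl h1]
        -- group by target vertex
        rw [Finset.sum_comp (fun w => pathCount (adjM src tgt) w n) tgt]
        rw [Finset.sum_subset (Finset.subset_univ _)]
        · apply Finset.sum_congr rfl
          intro w _
          rw [smul_eq_mul, Finset.filter_filter]
          rfl
        · intro w _ hw
          have : ((Finset.univ.filter fun e => src e = v).filter fun e => tgt e = w) = ∅ := by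
            rw [Finset.filter_eq_empty_iff]
            intro e he
            intro htgt
            exact hw (Finset.mem_image.2 ⟨e, he, htgt⟩)
          rw [this]
          simp
      · intro e _ f _ hef
        apply Finset.disjoint_left.2
        intro x hxe hxf
        obtain ⟨le, -, rfl⟩ := Finset.mem_image.1 hxe
        obtain ⟨lf, -, hl⟩ := Finset.mem_image.1 hxf
        have hfe : f = e := by injection hl
        exact hef hfe.symm

end paths

end PARTH
section PARTI

section tel
variable {V E : Type*} [Fintype V] [DecidableEq V] [Fintype E] [DecidableEq E]
variable {src tgt : E → V} {lam : ℝ} {ρ1 : V → ℝ} {μe : E → ℝ}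
variable (hlam : 0 < lam) (hρ0 : ∀ v, 0 ≤ ρ1 v)
variable (hedge : ∀ e : E, ρ1 (tgt e) ≤ lam * ρ1 (src e))
variable (hμ : ∀ e, 0 < ρ1 (src e) → μe e = ρ1 (tgt e) / (lam * ρ1 (src e)))

lemma isPath_cons' {v : V} {e : E} {l : List E} :
    IsPath src tgt v (e :: l) ↔ src e = v ∧ IsPath src tgt (tgt e) l := by
  constructor
  · rintro ⟨hc, hh⟩
    simp only [List.Chain', List.isChain_cons] at hc
    refine ⟨hh e rfl, hc.2, fun f hf => (hc.1 f hf).symm⟩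
  · rintro ⟨hsrc, hc, hh⟩
    refine ⟨List.isChain_cons.2 ⟨fun f hf => (hh f hf).symm, hc⟩, fun f hf => ?_⟩
    simp only [List.head?_cons, Option.mem_def, Option.some.injEq] at hf
    rw [← hf]
    exact hsrc

lemma endV_cons' (v : V) (e : E) (l : List E) :
    endV tgt v (e :: l) = endV tgt (tgt e) l := by
  cases l with
  | nil => simp [endV]
  | cons f l' =>
      obtain ⟨a, ha⟩ := Option.isSome_iff_exists.1 (List.getLast?_isSome.2 (List.cons_ne_nil f l'))
      simp [endV, ha]

include hlam hρ0 hedge hμ in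
lemma prod_of_pos_end : ∀ (l : List E) (v : V), IsPath src tgt v l →
    0 < ρ1 (endV tgt v l) →
    0 < ρ1 v ∧ (l.map μe).prod * (ρ1 v * lam ^ l.length) = ρ1 (endV tgt v l) := by
  intro l
  induction l with
  | nil =>
      intro v _ hend
      simp only [endV, List.getLast?_nil, Option.elim] at hend ⊢
      exact ⟨hend, by simp⟩
  | cons e l' ih =>
      intro v hp hend
      obtain ⟨hsrc, hp'⟩ := isPath_cons'.1 hp
      rw [endV_cons'] at hend ⊢
      obtain ⟨hte, hprod⟩ := ih (tgt e) hp' hend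
      have hv : 0 < ρ1 v := by
        have h1 := hedge e
        rw [hsrc] at h1
        by_contra hc
        push_neg at hc
        have : ρ1 v = 0 := le_antisymm hc (hρ0 v)
        rw [this, mul_zero] at h1
        linarith
      have hμe : μe e = ρ1 (tgt e) / (lam * ρ1 v) := by
        rw [hμ e (by rw [hsrc]; exact hv), hsrc]
      refine ⟨hv, ?_⟩
      rw [List.map_cons, List.prod_cons, List.length_cons, hμe]
      have h2 : ρ1 (tgt e) / (lam * ρ1 v) * (l'.map μe).prod * (ρ1 v * lam ^ (l'.length + 1))
          = (l'.map μe).prod * (ρ1 (tgt e) * lam ^ l'.length) := by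
        field_simp
        ring
      rw [h2, hprod]

include hlam hρ0 hedge hμ in
lemma prod_of_nonpos_end : ∀ (l : List E) (v : V), IsPath src tgt v l →
    0 < ρ1 v → ¬(0 < ρ1 (endV tgt v l)) → (l.map μe).prod = 0 := by
  intro l
  induction l with
  | nil =>
      intro v _ hv hend
      exact absurd hv (by simpa [endV] using hend)
  | cons e l' ih =>
      intro v hp hv hend
      obtain ⟨hsrc, hp'⟩ := isPath_cons'.1 hp
      rw [endV_cons'] at hend
      rw [List.map_cons, List.prod_cons]
      by_cases hte : 0 < ρ1 (tgt e)
      · rw [ih (tgt e) hp' hte hend, mul_zero]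
      · have : ρ1 (tgt e) = 0 := le_antisymm (by linarith [hρ0 (tgt e)] ) (hρ0 (tgt e))
        rw [hμ e (by rw [hsrc]; exact hv), this, zero_div, zero_mul]
end tel

end PARTI

/-- comparison between the `n`-step Markov measure `ℙⁿ` and the uniform
counting measure `Pⁿ` on the sphere `S_n` of the universal cover: there is `c > 1`
with `c⁻¹·ℙⁿ(A) ≤ Pⁿ(A ∩ LG) ≤ c·ℙⁿ(A)` for every subset `A`, where `LG` is the set
of paths ending at a large-growth vertex. -/
theorem counting_vs_markov_measure {V E : Type*} [Fintype V] [DecidableEq V]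
    [Fintype E] [DecidableEq E] (src tgt : E → V) (v0 : V) (lam : ℝ)
    (hAS : AlmostSemisimple (adjM src tgt) v0 lam)
    (ρ1 : V → ℝ) (hρ : IsRho1 (adjM src tgt) lam ρ1) (hv0 : 0 < ρ1 v0)
    (μe : E → ℝ) (hμ0 : ∀ e, 0 ≤ μe e)
    (hμ : ∀ e, 0 < ρ1 (src e) →
      μe e = ρ1 (tgt e) / (lam * ρ1 (src e))) :
    ∃ c : ℝ, 1 < c ∧ ∀ (n : ℕ) (A : Set (List E)),
      c⁻¹ * (∑ᶠ l ∈ {l : List E | IsPath src tgt v0 l ∧ l.length = n ∧ l ∈ A},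
          (l.map μe).prod) ≤
        (Nat.card {l : List E | IsPath src tgt v0 l ∧ l.length = n ∧ l ∈ A ∧
            0 < ρ1 (endV tgt v0 l)} : ℝ) /
          (Nat.card {l : List E | IsPath src tgt v0 l ∧ l.length = n} : ℝ) ∧
      (Nat.card {l : List E | IsPath src tgt v0 l ∧ l.length = n ∧ l ∈ A ∧
            0 < ρ1 (endV tgt v0 l)} : ℝ) /
          (Nat.card {l : List E | IsPath src tgt v0 l ∧ l.length = n} : ℝ) ≤
        c * (∑ᶠ l ∈ {l : List E | IsPath src tgt v0 l ∧ l.length = n ∧ l ∈ A},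
          (l.map μe).prod) := by
  classical
  have hlam1 := hAS.growth_gt_one
  have hlam : 0 < lam := lt_trans zero_lt_one hlam1
  obtain ⟨B, hB0, hB⟩ :=
    exists_pathCount_le (M := adjM src tgt) hlam hAS.eigen_le hAS.semisimple_top
  have hedge : ∀ e : E, ρ1 (tgt e) ≤ lam * ρ1 (src e) := by
    intro e
    apply rho1_le_of_edge hρ hlam
    have he : e ∈ Finset.univ.filter (fun f => src f = src e ∧ tgt f = tgt e) := by simp
    exact Finset.card_ne_zero_of_mem he
  have hρ0 : ∀ v, 0 ≤ ρ1 v := rho1_nonneg hρ hlam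
  have hlow : ∀ n : ℕ, ρ1 v0 * lam ^ n ≤ B * (pathCount (adjM src tgt) v0 n : ℝ) :=
    fun n => rho1_le_pathCount hρ hlam hB0 hB v0 n
  set ρmax : ℝ := Finset.univ.sup' ⟨v0, Finset.mem_univ v0⟩ ρ1 with hρmaxdef
  have hρmax_le : ∀ v, ρ1 v ≤ ρmax := fun v => Finset.le_sup' ρ1 (Finset.mem_univ v)
  have hρmax0 : 0 < ρmax := lt_of_lt_of_le hv0 (hρmax_le v0)
  have hSne : (Finset.univ.filter fun v => 0 < ρ1 v).Nonempty :=
    ⟨v0, by simp [hv0]⟩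
  set ρmin : ℝ := (Finset.univ.filter fun v => 0 < ρ1 v).inf' hSne ρ1 with hρmindef
  have hρmin0 : 0 < ρmin := by
    rw [hρmindef, Finset.lt_inf'_iff]
    intro v hv
    exact (Finset.mem_filter.1 hv).2
  have hρmin_le : ∀ v, 0 < ρ1 v → ρmin ≤ ρ1 v := fun v hv =>
    Finset.inf'_le ρ1 (by simp [hv])
  refine ⟨max (max (ρmax * B / ρ1 v0) (B / ρmin)) 2,
    lt_of_lt_of_le one_lt_two (le_max_right _ _), ?_⟩
  set c : ℝ := max (max (ρmax * B / ρ1 v0) (B / ρmin)) 2 with hcdef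
  have hc0 : 0 < c := lt_of_lt_of_le zero_lt_two (le_max_right _ _)
  have hc1 : ρmax * B ≤ c * ρ1 v0 := by
    have h := le_trans (le_max_left _ _) (le_max_left (max (ρmax * B / ρ1 v0) (B / ρmin)) 2)
    rw [div_le_iff₀ hv0] at h
    exact h
  have hc2 : B ≤ c * ρmin := by
    have h := le_trans (le_max_right _ _) (le_max_left (max (ρmax * B / ρ1 v0) (B / ρmin)) 2)
    rw [div_le_iff₀ hρmin0] at h
    exact h
  intro n A
  set PF : Finset (List E) := pathFinset src tgt n v0 with hPFdef
  set SA : Finset (List E) := PF.filter (fun l => l ∈ A) with hSAdef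
  set T : Finset (List E) := SA.filter (fun l => 0 < ρ1 (endV tgt v0 l)) with hTdef
  have hDn : (Nat.card {l : List E | IsPath src tgt v0 l ∧ l.length = n} : ℝ)
      = (pathCount (adjM src tgt) v0 n : ℝ) := by
    have hseteq : {l : List E | IsPath src tgt v0 l ∧ l.length = n} = ↑PF := by
      ext l
      simp [hPFdef, mem_pathFinset]
    rw [hseteq, Nat.card_coe_set_eq, Set.ncard_coe_finset, card_pathFinset]
  have hKn : (Nat.card {l : List E | IsPath src tgt v0 l ∧ l.length = n ∧ l ∈ A ∧
        0 < ρ1 (endV tgt v0 l)} : ℝ) = (T.card : ℝ) := by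
    have hseteq : {l : List E | IsPath src tgt v0 l ∧ l.length = n ∧ l ∈ A ∧
        0 < ρ1 (endV tgt v0 l)} = ↑T := by
      ext l
      simp only [hTdef, hSAdef, hPFdef, Set.mem_setOf_eq, Finset.coe_filter,
        Finset.mem_filter, mem_pathFinset]
      tauto
    rw [hseteq, Nat.card_coe_set_eq, Set.ncard_coe_finset]
  have hSeq : (∑ᶠ l ∈ {l : List E | IsPath src tgt v0 l ∧ l.length = n ∧ l ∈ A},
      (l.map μe).prod) = ∑ l ∈ T, (l.map μe).prod := by
    have hseteq : {l : List E | IsPath src tgt v0 l ∧ l.length = n ∧ l ∈ A} = ↑SA := by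
      ext l
      simp only [hSAdef, hPFdef, Set.mem_setOf_eq, Finset.coe_filter,
        Finset.mem_filter, mem_pathFinset]
      tauto
    rw [hseteq, finsum_mem_coe_finset]
    symm
    apply Finset.sum_subset (Finset.filter_subset _ _)
    intro l hl hlT
    have hmem := Finset.mem_filter.1 hl
    obtain ⟨hpath, hlen⟩ := (mem_pathFinset src tgt n v0 l).1 hmem.1
    have hnend : ¬ 0 < ρ1 (endV tgt v0 l) := fun hpos =>
      hlT (Finset.mem_filter.2 ⟨hl, hpos⟩)
    exact prod_of_nonpos_end hlam hρ0 hedge hμ l v0 hpath hv0 hnend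
  have hTel : ∀ l ∈ T, (l.map μe).prod * (ρ1 v0 * lam ^ n) = ρ1 (endV tgt v0 l)
      ∧ 0 < ρ1 (endV tgt v0 l) := by
    intro l hl
    have h1 := Finset.mem_filter.1 hl
    have h2 := Finset.mem_filter.1 h1.1
    obtain ⟨hpath, hlen⟩ := (mem_pathFinset src tgt n v0 l).1 h2.1
    have h3 := prod_of_pos_end hlam hρ0 hedge hμ l v0 hpath h1.2
    rw [hlen] at h3
    exact ⟨h3.2, h1.2⟩
  rw [hDn, hKn, hSeq]
  set Sr : ℝ := ∑ l ∈ T, (l.map μe).prod with hSrdef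
  set P : ℝ := (T.card : ℝ) with hPdef
  set D : ℝ := (pathCount (adjM src tgt) v0 n : ℝ) with hDdef
  have hP0 : (0:ℝ) ≤ P := Nat.cast_nonneg _
  have hlamn : (0:ℝ) < lam ^ n := pow_pos hlam n
  have hq : 0 < ρ1 v0 * lam ^ n := mul_pos hv0 hlamn
  have hi : Sr * (ρ1 v0 * lam ^ n) ≤ P * ρmax := by
    rw [hSrdef, Finset.sum_mul]
    calc ∑ l ∈ T, (l.map μe).prod * (ρ1 v0 * lam ^ n)
        = ∑ l ∈ T, ρ1 (endV tgt v0 l) :=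
          Finset.sum_congr rfl fun l hl => (hTel l hl).1
      _ ≤ ∑ _l ∈ T, ρmax := Finset.sum_le_sum fun l _ => hρmax_le _
      _ = P * ρmax := by rw [Finset.sum_const, nsmul_eq_mul]
  have hiii : P * ρmin ≤ Sr * (ρ1 v0 * lam ^ n) := by
    rw [hSrdef, Finset.sum_mul]
    calc P * ρmin = ∑ _l ∈ T, ρmin := by rw [Finset.sum_const, nsmul_eq_mul]
      _ ≤ ∑ l ∈ T, ρ1 (endV tgt v0 l) :=
          Finset.sum_le_sum fun l hl => hρmin_le _ (hTel l hl).2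
      _ = ∑ l ∈ T, (l.map μe).prod * (ρ1 v0 * lam ^ n) :=
          (Finset.sum_congr rfl fun l hl => (hTel l hl).1).symm
  have hS0 : 0 ≤ Sr := by
    have h1 : 0 ≤ Sr * (ρ1 v0 * lam ^ n) :=
      le_trans (mul_nonneg hP0 hρmin0.le) hiii
    nlinarith
  have hD0 : (0:ℝ) < D := by
    have h1 := hlow n
    have h2 : (0:ℝ) ≤ D := Nat.cast_nonneg _
    nlinarith
  have hDle : D ≤ B * lam ^ n := hB v0 n
  constructor
  · rw [le_div_iff₀ hD0]
    have e1 : Sr * D ≤ c * P := by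
      have h1 : Sr * D * ρ1 v0 ≤ Sr * (B * lam ^ n) * ρ1 v0 := by
        apply mul_le_mul_of_nonneg_right _ hv0.le
        exact mul_le_mul_of_nonneg_left hDle hS0
      have h2 : Sr * (B * lam ^ n) * ρ1 v0 = (Sr * (ρ1 v0 * lam ^ n)) * B := by ring
      have h3 : (Sr * (ρ1 v0 * lam ^ n)) * B ≤ (P * ρmax) * B :=
        mul_le_mul_of_nonneg_right hi hB0.le
      have h4 : (P * ρmax) * B ≤ P * (c * ρ1 v0) := by
        have := mul_le_mul_of_nonneg_left hc1 hP0
        calc (P * ρmax) * B = P * (ρmax * B) := by ring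
          _ ≤ P * (c * ρ1 v0) := this
      have h5 : Sr * D * ρ1 v0 ≤ (c * P) * ρ1 v0 := by
        calc Sr * D * ρ1 v0 ≤ (Sr * (ρ1 v0 * lam ^ n)) * B := by linarith [h1, h2.le]
          _ ≤ P * (c * ρ1 v0) := le_trans h3 h4
          _ = (c * P) * ρ1 v0 := by ring
      exact le_of_mul_le_mul_right h5 hv0
    have hrw : c⁻¹ * Sr * D = Sr * D / c := by
      field_simp
    rw [hrw, div_le_iff₀ hc0]
    linarith [e1]
  · rw [div_le_iff₀ hD0]
    have h1 : Sr * (ρ1 v0 * lam ^ n) ≤ Sr * (B * D) :=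
      mul_le_mul_of_nonneg_left (hlow n) hS0
    have h2 : P * ρmin ≤ (Sr * D) * B := by
      calc P * ρmin ≤ Sr * (ρ1 v0 * lam ^ n) := hiii
        _ ≤ Sr * (B * D) := h1
        _ = (Sr * D) * B := by ring
    have hSD0 : 0 ≤ Sr * D := mul_nonneg hS0 hD0.le
    have h3 : (Sr * D) * B ≤ (Sr * D) * (c * ρmin) :=
      mul_le_mul_of_nonneg_left hc2 hSD0
    have h4 : P * ρmin ≤ (c * Sr * D) * ρmin := by
      calc P * ρmin ≤ (Sr * D) * (c * ρmin) := le_trans h2 h3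
        _ = (c * Sr * D) * ρmin := by ring
    exact le_of_mul_le_mul_right h4 hρmin0
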